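/- (Necessity in the main theorem.) Suppose there exist a complex Hilbert space H, an injective unital *-homomorphism π : A → B(H) into the bounded operators on H, and a bounded operator U ∈ B(H) such that for every a ∈ A: U·π(a)·U* = π(δ(a)), U*·π(a)·U ∈ π(A), and U·π(a) = π(δ(a))·U. Then there exists a complete transfer operator δ* for (A, δ); moreover it satisfies π(δ*(a)) = U*·π(a)·U for all a ∈ A. -/

import Mathlib

/-- A (not necessarily unital) *-algebra endomorphism of a unital C*-algebra:
a linear, multiplicative, star-preserving map. -/
def IsEndomorphism {A : Type*} [CStarAlgebra A] (δ : A → A) : Prop :=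
  IsLinearMap ℂ δ ∧ (∀ a b, δ (a * b) = δ a * δ b) ∧ (∀ a, δ (star a) = star (δ a))

/-- A transfer operator for `(A, δ)`: a continuous positive linear map `δs`
satisfying `δs (δ a * b) = a * δs b`. -/
def IsTransferOperator {A : Type*} [CStarAlgebra A] [PartialOrder A] [StarOrderedRing A]
    (δ δs : A → A) : Prop :=
  Continuous δs ∧ IsLinearMap ℂ δs ∧ (∀ a, 0 ≤ a → 0 ≤ δs a) ∧
    ∀ a b, δs (δ a * b) = a * δs b

/-- Necessity in the main theorem: if (H, π, U) realizes A as a coefficient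
algebra associated with δ, then there exists a complete transfer operator δ*
for (A, δ), implemented by U* · U. -/
theorem coefficient_algebra_necessity {A : Type*} [CStarAlgebra A] [PartialOrder A]
    [StarOrderedRing A] (δ : A → A) (hδ : IsEndomorphism δ)
    {H : Type*} [NormedAddCommGroup H] [InnerProductSpace ℂ H] [CompleteSpace H]
    (π : A →⋆ₐ[ℂ] (H →L[ℂ] H)) (U : H →L[ℂ] H)
    (hinj : Function.Injective π)
    (h1 : ∀ a : A, U * π a * star U = π (δ a))
    (h2 : ∀ a : A, star U * π a * U ∈ Set.range π)
    (h3 : ∀ a : A, U * π a = π (δ a) * U) :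
    ∃ δs : A → A, IsTransferOperator δ δs ∧ (∀ a : A, δ (δs a) = δ 1 * a * δ 1) ∧
      ∀ a : A, π (δs a) = star U * π a * U := by
  obtain ⟨hlin, hmul, hstar⟩ := hδ
  -- define δs via the range condition h2
  choose δs hspec using fun a => (h2 a)
  refine ⟨δs, ⟨?_, ?_, ?_, ?_⟩, ?_, hspec⟩
  -- auxiliary facts
  case _ =>
    -- continuity
    have hbound : ∀ a, ‖δs a‖ ≤ ‖U‖ * ‖U‖ * ‖a‖ := by
      intro a
      have : ‖π (δs a)‖ = ‖δs a‖ := NonUnitalStarAlgHom.norm_map π hinj (δs a)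
      rw [← this, hspec a]
      calc ‖star U * π a * U‖ ≤ ‖star U * π a‖ * ‖U‖ := norm_mul_le _ _
        _ ≤ ‖star U‖ * ‖π a‖ * ‖U‖ :=
            mul_le_mul_of_nonneg_right (norm_mul_le _ _) (norm_nonneg _)
        _ = ‖U‖ * ‖U‖ * ‖a‖ := by
            rw [norm_star, NonUnitalStarAlgHom.norm_map π hinj a]; ring
    have hadd : ∀ x y, δs (x + y) = δs x + δs y := fun x y => hinj <| by
      rw [map_add, hspec, hspec, hspec, map_add]; noncomm_ring
    have hsmul : ∀ (c : ℂ) (x), δs (c • x) = c • δs x := fun c x => hinj <| by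
      rw [map_smul, hspec, hspec, map_smul]; simp [mul_smul_comm, smul_mul_assoc]
    exact AddMonoidHomClass.continuous_of_bound
      (IsLinearMap.mk' δs ⟨hadd, hsmul⟩ : A →ₗ[ℂ] A) (‖U‖ * ‖U‖) hbound
  case _ =>
    constructor
    · exact fun x y => hinj <| by
        rw [map_add, hspec, hspec, hspec, map_add]; noncomm_ring
    · exact fun c x => hinj <| by
        rw [map_smul, hspec, hspec, map_smul, mul_smul_comm, smul_mul_assoc]
  case _ =>
    -- positivity
    intro a ha
    have hsa : IsSelfAdjoint a := .of_nonneg ha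
    have hπa : IsSelfAdjoint (π a) := hsa.map π
    have hπpos : 0 ≤ π (δs a) := by
      rw [hspec a, ← CFC.sqrt_mul_sqrt_self a ha]
      have hsq : IsSelfAdjoint (CFC.sqrt a) := .of_nonneg (CFC.sqrt_nonneg a)
      calc (0 : H →L[ℂ] H) ≤ star (π (CFC.sqrt a) * U) * (π (CFC.sqrt a) * U) :=
            star_mul_self_nonneg _
        _ = star U * π (CFC.sqrt a * CFC.sqrt a) * U := by
            rw [star_mul, map_mul, ← map_star]
            rw [hsq.star_eq]; noncomm_ring
    have hsa' : IsSelfAdjoint (δs a) := by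
      have : π (star (δs a)) = π (δs a) := by
        rw [map_star, hspec a, star_mul, star_mul, star_star, hπa.star_eq, mul_assoc]
      exact hinj this
    rw [StarOrderedRing.nonneg_iff_spectrum_nonneg (R := ℝ) (δs a) hsa']
    intro x hx
    rw [← hsa'.map_spectrum_real π hinj] at hx
    exact spectrum_nonneg_of_nonneg hπpos hx
  case _ =>
    -- transfer identity
    intro a b
    have key : π a * star U = star U * π (δ a) := by
      have := congrArg star (h3 (star a))
      rw [star_mul, star_mul, ← map_star, ← map_star, star_star, ← hstar,
        star_star] at this
      exact this
    refine hinj ?_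
    calc π (δs (δ a * b)) = star U * (π (δ a) * π b) * U := by rw [hspec, map_mul]
      _ = π a * star U * π b * U := by rw [← mul_assoc, ← key]
      _ = π a * (star U * π b * U) := by noncomm_ring
      _ = π (a * δs b) := by rw [map_mul, hspec]
  case _ =>
    -- completeness
    intro a
    refine hinj ?_
    have h1' : π (δ (δs a)) = U * π (δs a) * star U := (h1 (δs a)).symm
    have hδ1 : π (δ 1) = U * star U := by rw [← h1 1, map_one, mul_one]
    rw [h1', hspec a, map_mul, map_mul, hδ1]
    noncomm_ring
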